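/- With $S$ distributed according to the stationary CDF $F_S$ of the previous statement and $\Delta \sim$ Laplace($\lambda$) independent of $S$, the generation $G = \min\{(-\Delta - \alpha_d S)^+, G^{\max}\}$ has CDF $F_G(g) = 1 - \frac{1-\alpha}{2(1-\alpha e^{-(1/\alpha_c-\alpha_d)\lambda S^{\max}/2})} e^{-\lambda g}$ for $0 \le g < G^{\max}$, $F_G(g) = 0$ for $g < 0$, and $F_G(g) = 1$ for $g \ge G^{\max}$. -/

import Mathlib

open MeasureTheory ProbabilityTheory Real
open scoped ENNReal

/-- Stationary CDF of the stored power under the greedy policy. -/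
noncomputable def statCDF (l αc αd Smax : ℝ) (s : ℝ) : ℝ :=
  if s < 0 then 0
  else if s < Smax then
    (1 - (1 + αc * αd) / 2 * exp (-((1 / αc - αd) * l * s / 2))) /
      (1 - αc * αd * exp (-((1 / αc - αd) * l * Smax / 2)))
  else 1

/-- CDF of a Laplace(λ) random variable. -/
noncomputable def laplaceCDF (l x : ℝ) : ℝ :=
  if x < 0 then exp (l * x) / 2 else 1 - exp (-(l * x)) / 2


lemma myIntegral_exp_neg_mul (k a b : ℝ) (hk : k ≠ 0) :
    ∫ s in a..b, Real.exp (-(k*s)) = (Real.exp (-(k*a)) - Real.exp (-(k*b)))/k := by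
  have hF : ∀ x ∈ Set.uIcc a b,
      HasDerivAt (fun s => -(Real.exp (-(k*s))/k)) (Real.exp (-(k*x))) x := by
    intro x _
    have h1 : HasDerivAt (fun s : ℝ => -(k*s)) (-k) x := by
      simpa using ((hasDerivAt_id x).const_mul k).fun_neg
    have h3 := (h1.exp.div_const k).fun_neg
    refine h3.congr_deriv ?_
    field_simp
  rw [intervalIntegral.integral_eq_sub_of_hasDerivAt hF ((by fun_prop : Continuous fun s : ℝ => Real.exp (-(k*s))).intervalIntegrable a b)]
  field_simp
  ring

lemma myLintegral_exp_Ioc (A k a b : ℝ) (hA : 0 ≤ A) (hk : k ≠ 0) (hab : a ≤ b) :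
    ∫⁻ s in Set.Ioc a b, ENNReal.ofReal (A * Real.exp (-(k*s))) =
      ENNReal.ofReal (A * (Real.exp (-(k*a)) - Real.exp (-(k*b)))/k) := by
  have hcont : Continuous fun s : ℝ => A * Real.exp (-(k*s)) := by fun_prop
  rw [← MeasureTheory.ofReal_integral_eq_lintegral_ofReal
      (hcont.integrableOn_Ioc) (Filter.Eventually.of_forall fun s => by
        exact mul_nonneg hA (Real.exp_pos _).le)]
  rw [← intervalIntegral.integral_of_le hab, intervalIntegral.integral_const_mul,
    myIntegral_exp_neg_mul k a b hk]
  ring_nf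

noncomputable def mixM (p0 p1 A k Smax : ℝ) : Measure ℝ :=
  ENNReal.ofReal p0 • Measure.dirac 0 +
    volume.withDensity ((Set.Ioo (0:ℝ) Smax).indicator
      fun s => ENNReal.ofReal (A * Real.exp (-(k*s)))) +
    ENNReal.ofReal p1 • Measure.dirac Smax

lemma mixM_apply (p0 p1 A k Smax : ℝ) {B : Set ℝ} (hB : MeasurableSet B) :
    mixM p0 p1 A k Smax B =
      ENNReal.ofReal p0 * B.indicator 1 0 +
        (∫⁻ s in B ∩ Set.Ioo 0 Smax, ENNReal.ofReal (A * Real.exp (-(k*s)))) +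
        ENNReal.ofReal p1 * B.indicator 1 Smax := by
  rw [mixM, Measure.add_apply, Measure.add_apply, Measure.smul_apply, Measure.smul_apply,
    Measure.dirac_apply' _ hB, Measure.dirac_apply' _ hB, withDensity_apply _ hB,
    lintegral_indicator measurableSet_Ioo, Measure.restrict_restrict measurableSet_Ioo,
    Set.inter_comm]
  simp only [smul_eq_mul]

lemma mixM_meas_dens (A k Smax : ℝ) :
    Measurable ((Set.Ioo (0:ℝ) Smax).indicator
      fun s => ENNReal.ofReal (A * Real.exp (-(k*s)))) :=
  (Measurable.ennreal_ofReal (by fun_prop)).indicator measurableSet_Ioo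

lemma mixM_lintegral (p0 p1 A k Smax : ℝ) {h : ℝ → ℝ≥0∞} (hm : Measurable h) :
    ∫⁻ s, h s ∂(mixM p0 p1 A k Smax) =
      ENNReal.ofReal p0 * h 0 +
        (∫⁻ s in Set.Ioo 0 Smax, ENNReal.ofReal (A * Real.exp (-(k*s))) * h s) +
        ENNReal.ofReal p1 * h Smax := by
  rw [mixM, lintegral_add_measure, lintegral_add_measure, lintegral_smul_measure,
    lintegral_smul_measure, lintegral_dirac' _ hm, lintegral_dirac' _ hm,
    lintegral_withDensity_eq_lintegral_mul _ (mixM_meas_dens A k Smax) hm]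
  rw [← lintegral_indicator measurableSet_Ioo]
  congr 1
  congr 1
  refine lintegral_congr fun s => ?_
  by_cases hs : s ∈ Set.Ioo (0:ℝ) Smax <;>
    simp [hs, Set.indicator_of_mem, Set.indicator_of_notMem]

lemma mixM_Iic (p0 p1 A k Smax : ℝ) (hp0 : 0 ≤ p0) (hp1 : 0 ≤ p1) (hA : 0 ≤ A)
    (hk : 0 < k) (hS : 0 < Smax) (a : ℝ) :
    mixM p0 p1 A k Smax (Set.Iic a) =
      if a < 0 then 0 else if a < Smax then
        ENNReal.ofReal (p0 + A * (1 - Real.exp (-(k*a)))/k)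
      else ENNReal.ofReal (p0 + A * (1 - Real.exp (-(k*Smax)))/k + p1) := by
  have hX : ∀ b : ℝ, 0 ≤ b → 0 ≤ A * (1 - Real.exp (-(k*b)))/k := by
    intro b hb
    apply div_nonneg _ hk.le
    apply mul_nonneg hA
    have : -(k*b) ≤ 0 := by nlinarith
    nlinarith [Real.exp_le_one_iff.mpr this]
  rw [mixM_apply _ _ _ _ _ measurableSet_Iic]
  split_ifs with h1 h2
  · have e1 : Set.Iic a ∩ Set.Ioo 0 Smax = ∅ := by
      ext x; simp only [Set.mem_inter_iff, Set.mem_Iic, Set.mem_Ioo, Set.mem_empty_iff_false]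
      constructor
      · rintro ⟨hx, hx2, _⟩; linarith
      · exact fun h => h.elim
    simp [e1, Set.indicator_of_notMem, Set.mem_Iic, not_le.mpr h1,
      not_le.mpr (lt_of_lt_of_le h1 hS.le)]
  · push_neg at h1
    have e1 : Set.Iic a ∩ Set.Ioo 0 Smax = Set.Ioc 0 a := by
      ext x; simp only [Set.mem_inter_iff, Set.mem_Iic, Set.mem_Ioo, Set.mem_Ioc]
      constructor
      · rintro ⟨hx, hx2, _⟩; exact ⟨hx2, hx⟩
      · rintro ⟨hx1, hx2⟩; exact ⟨hx2, hx1, lt_of_le_of_lt hx2 h2⟩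
    rw [e1, myLintegral_exp_Ioc A k 0 a hA hk.ne' h1]
    have h0 : (0:ℝ) ∈ Set.Iic a := h1
    have hS0 : Smax ∉ Set.Iic a := not_le.mpr h2
    rw [Set.indicator_of_mem h0, Set.indicator_of_notMem hS0]
    simp only [mul_zero, add_zero, Pi.one_apply, mul_one]
    rw [← ENNReal.ofReal_add hp0 (by simpa using hX a h1)]
    norm_num
  · push_neg at h1 h2
    have e1 : Set.Iic a ∩ Set.Ioo 0 Smax = Set.Ioo 0 Smax := by
      apply Set.inter_eq_self_of_subset_right
      intro x hx; exact le_trans hx.2.le h2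
    rw [e1, Measure.restrict_congr_set Ioo_ae_eq_Ioc,
      myLintegral_exp_Ioc A k 0 Smax hA hk.ne' hS.le]
    have h0 : (0:ℝ) ∈ Set.Iic a := le_trans hS.le h2
    have hS0 : Smax ∈ Set.Iic a := h2
    rw [Set.indicator_of_mem h0, Set.indicator_of_mem hS0]
    simp only [Pi.one_apply, mul_one]
    rw [← ENNReal.ofReal_add hp0 (by simpa using hX Smax hS.le),
      ← ENNReal.ofReal_add (add_nonneg hp0 (by simpa using hX Smax hS.le)) hp1]
    norm_num


lemma laplaceCDF_nonpos (l : ℝ) {t : ℝ} (ht : t ≤ 0) :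
    laplaceCDF l t = Real.exp (l*t)/2 := by
  unfold laplaceCDF
  rcases lt_or_eq_of_le ht with h | h
  · simp [h]
  · subst h; norm_num

lemma laplaceCDF_cont (l : ℝ) : Continuous (laplaceCDF l) := by
  have : laplaceCDF l = fun x =>
      if x ≤ 0 then Real.exp (l*x)/2 else 1 - Real.exp (-(l*x))/2 := by
    funext x
    unfold laplaceCDF
    rcases lt_trichotomy x 0 with h | h | h
    · simp [h, h.le]
    · subst h; norm_num
    · simp [not_lt.mpr h.le, not_le.mpr h]
  rw [this]
  apply Continuous.if_le (by fun_prop) (by fun_prop) continuous_id continuous_const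
  intro x hx
  simp only [id] at hx
  subst hx
  norm_num

lemma atomless_of_cont_cdf {ν : Measure ℝ} [IsFiniteMeasure ν] {F : ℝ → ℝ}
    (hF : Continuous F) (h : ∀ x, ν (Set.Iic x) = ENNReal.ofReal (F x)) (x : ℝ) :
    ν {x} = 0 := by
  set G : ℝ → ℝ := fun t => max (F t) 0 with hG
  have hGc : Continuous G := hF.max continuous_const
  have hGv : ∀ t, (ν (Set.Iic t)).toReal = G t := by
    intro t; rw [h t, ENNReal.toReal_ofReal']
  set m := (ν {x}).toReal with hm
  have hfin : ν {x} ≠ ⊤ := measure_ne_top ν _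
  have key : ∀ y, y < x → G y + m ≤ G x := by
    intro y hy
    have hdisj : Disjoint (Set.Iic y) ({x} : Set ℝ) := by
      simp [Set.disjoint_singleton_right, not_le.mpr hy]
    have hsub : Set.Iic y ∪ {x} ⊆ Set.Iic x := by
      intro z hz
      rcases hz with hz | hz
      · exact le_trans hz hy.le
      · simp at hz; simp [hz]
    have hmeas := measure_union (μ := ν) hdisj (measurableSet_singleton x)
    have hle : ν (Set.Iic y) + ν {x} ≤ ν (Set.Iic x) := by
      rw [← hmeas]; exact measure_mono hsub
    have hle2 := ENNReal.toReal_le_toReal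
      (by simp [ENNReal.add_ne_top, measure_ne_top]) (measure_ne_top ν _) |>.mpr hle
    rw [ENNReal.toReal_add (measure_ne_top ν _) hfin, hGv y, hGv x] at hle2
    exact hle2
  by_contra hne
  have hmpos : 0 < m := by
    rcases (ENNReal.toReal_nonneg (a := ν {x})).lt_or_eq with h' | h'
    · exact h'
    · exfalso
      apply hne
      have := h'.symm
      rwa [ENNReal.toReal_eq_zero_iff, or_iff_left hfin] at this
  obtain ⟨δ, hδpos, hδ⟩ := Metric.continuousAt_iff.mp (hGc.continuousAt (x := x)) m hmpos
  have hy : x - δ/2 < x := by linarith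
  have hd : dist (x - δ/2) x < δ := by
    rw [Real.dist_eq, abs_of_nonpos (by linarith)]
    linarith
  have h2 := hδ hd
  rw [Real.dist_eq, abs_lt] at h2
  have := key _ hy
  have hm0 : 0 ≤ m := ENNReal.toReal_nonneg
  obtain ⟨h2a, h2b⟩ := h2
  linarith

lemma Iio_eq_Iic_of_cont_cdf {ν : Measure ℝ} [IsFiniteMeasure ν] {F : ℝ → ℝ}
    (hF : Continuous F) (h : ∀ x, ν (Set.Iic x) = ENNReal.ofReal (F x)) (x : ℝ) :
    ν (Set.Iio x) = ν (Set.Iic x) := by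
  have : Set.Iic x = Set.Iio x ∪ {x} := by
    rw [Set.Iio_union_right]
  rw [this, measure_union (by simp) (measurableSet_singleton x),
    atomless_of_cont_cdf hF h x, add_zero]




set_option maxHeartbeats 2000000 in
/-- Stationary distribution of the fast-ramping generation
`G = min{(-Δ - αd S)⁺, Gᵐᵃˣ}` when `S` is stationary and `Δ ~ Laplace(λ)` is
independent of `S`. -/
theorem stmt8 {Ω : Type*} [MeasureSpace Ω] [IsProbabilityMeasure (ℙ : Measure Ω)]
    (S Δ : Ω → ℝ) (l αc αd Smax Gmax : ℝ) (hl : 0 < l)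
    (hαc : αc ∈ Set.Ioo (0 : ℝ) 1) (hαd : αd ∈ Set.Ioo (0 : ℝ) 1)
    (hSmax : 0 < Smax) (hGmax : 0 < Gmax)
    (hmS : Measurable S) (hmΔ : Measurable Δ)
    (hindep : IndepFun S Δ ℙ)
    (hlawS : ∀ s, (ℙ {ω | S ω ≤ s}).toReal = statCDF l αc αd Smax s)
    (hlawΔ : ∀ x, (ℙ {ω | Δ ω ≤ x}).toReal = laplaceCDF l x) :
    ∀ g : ℝ,
      (0 ≤ g → g < Gmax →
        (ℙ {ω | min (max (-(Δ ω) - αd * S ω) 0) Gmax ≤ g}).toReal =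
          1 - (1 - αc * αd) /
            (2 * (1 - αc * αd * exp (-((1 / αc - αd) * l * Smax / 2)))) *
            exp (-(l * g))) ∧
      (g < 0 → (ℙ {ω | min (max (-(Δ ω) - αd * S ω) 0) Gmax ≤ g}).toReal = 0) ∧
      (Gmax ≤ g → (ℙ {ω | min (max (-(Δ ω) - αd * S ω) 0) Gmax ≤ g}).toReal = 1) := by
  obtain ⟨hαc0, hαc1⟩ := hαc
  obtain ⟨hαd0, hαd1⟩ := hαd
  have hinv : 1 < 1/αc := by rw [lt_div_iff₀ hαc0]; linarith
  have hq : 0 < 1/αc - αd := by linarith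
  set c : ℝ := (1/αc - αd) * l / 2 with hcdef
  have hc : 0 < c := by positivity
  set E : ℝ := Real.exp (-(c * Smax)) with hEdef
  have hE0 : 0 < E := Real.exp_pos _
  have hE1 : E < 1 := by
    rw [hEdef, show (1:ℝ) = Real.exp 0 by simp]
    exact Real.exp_lt_exp.mpr (by nlinarith)
  have hα0 : 0 < αc * αd := by positivity
  have hα1 : αc * αd < 1 := by nlinarith
  set D : ℝ := 1 - αc * αd * E with hDdef
  have hD : 0 < D := by nlinarith
  have hEeq : Real.exp (-((1/αc - αd) * l * Smax / 2)) = E := by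
    rw [hEdef]; congr 1; rw [hcdef]; ring
  -- the three mixture parameters
  set p0 : ℝ := (1 - αc * αd) / (2 * D) with hp0def
  set p1 : ℝ := (1 - αc * αd) * E / (2 * D) with hp1def
  set A : ℝ := (1 + αc * αd) * c / (2 * D) with hAdef
  have h1α : (0:ℝ) ≤ 1 - αc * αd := by linarith
  have hp0 : 0 ≤ p0 := div_nonneg h1α (by positivity)
  have hp1 : 0 ≤ p1 := div_nonneg (mul_nonneg h1α hE0.le) (by positivity)
  have hA : 0 ≤ A := div_nonneg (mul_nonneg (by linarith) hc.le) (by positivity)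
  -- laws
  haveI hPS : IsProbabilityMeasure (Measure.map S ℙ) := Measure.isProbabilityMeasure_map hmS.aemeasurable
  haveI hPΔ : IsProbabilityMeasure (Measure.map Δ ℙ) := Measure.isProbabilityMeasure_map hmΔ.aemeasurable
  have hμIic : ∀ s, (Measure.map S ℙ) (Set.Iic s) = ENNReal.ofReal (statCDF l αc αd Smax s) := by
    intro s
    rw [Measure.map_apply hmS measurableSet_Iic, ← hlawS s,
      ENNReal.ofReal_toReal (measure_ne_top _ _)]
    rfl
  have hνIic : ∀ x, (Measure.map Δ ℙ) (Set.Iic x) = ENNReal.ofReal (laplaceCDF l x) := by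
    intro x
    rw [Measure.map_apply hmΔ measurableSet_Iic, ← hlawΔ x,
      ENNReal.ofReal_toReal (measure_ne_top _ _)]
    rfl
  -- identify the law of S with the mixture measure
  have hμeq : Measure.map S ℙ = mixM p0 p1 A c Smax := by
    refine Measure.ext_of_Iic _ _ fun a => ?_
    rw [hμIic a, mixM_Iic p0 p1 A c Smax hp0 hp1 hA hc hSmax a]
    unfold statCDF
    have hea : Real.exp (-((1/αc - αd) * l * a / 2)) = Real.exp (-(c * a)) := by
      congr 1; rw [hcdef]; ring
    split_ifs with h1 h2
    · simp
    · rw [hea, hEeq]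
      congr 1
      rw [hp0def, hAdef, ← hDdef]
      field_simp
      ring
    · rw [show p0 + A * (1 - Real.exp (-(c*Smax))) / c + p1 = 1 by
        rw [hp0def, hAdef, hp1def, ← hEdef]
        field_simp
        ring]
  intro g
  refine ⟨?_, ?_, ?_⟩
  · -- main case
    intro hg0 hgG
    set B : Set Ω := {ω | Δ ω < -g - αd * S ω} with hBdef
    have hmB : MeasurableSet B :=
      measurableSet_lt hmΔ (measurable_const.sub (hmS.const_mul αd))
    have hevent : {ω | min (max (-(Δ ω) - αd * S ω) 0) Gmax ≤ g} = Bᶜ := by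
      ext ω
      simp only [hBdef, Set.mem_setOf_eq, Set.mem_compl_iff, not_lt]
      constructor
      · intro h
        rcases min_le_iff.mp h with h' | h'
        · have := le_trans (le_max_left (-(Δ ω) - αd * S ω) 0) h'
          linarith
        · linarith
      · intro h
        exact le_trans (min_le_left _ _) (max_le (by linarith) hg0)
    have hpair : Measure.map (fun ω => (S ω, Δ ω)) ℙ
        = (Measure.map S ℙ).prod (Measure.map Δ ℙ) :=
      (indepFun_iff_map_prod_eq_prod_map_map hmS.aemeasurable hmΔ.aemeasurable).mp hindep
    set A2 : Set (ℝ × ℝ) := {p | p.2 < -g - αd * p.1} with hA2def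
    have hmA2 : MeasurableSet A2 :=
      measurableSet_lt measurable_snd (measurable_const.sub (measurable_fst.const_mul αd))
    have hmh : Measurable fun s : ℝ => ENNReal.ofReal (laplaceCDF l (-g - αd * s)) :=
      Measurable.ennreal_ofReal (((laplaceCDF_cont l).comp
        (by fun_prop : Continuous fun s : ℝ => -g - αd * s)).measurable)
    set k' : ℝ := c + l * αd with hk'def
    have hk' : 0 < k' := by positivity
    have hek1 : Real.exp (-(k' * Smax)) ≤ 1 := Real.exp_le_one_iff.mpr (by nlinarith)
    have hBval : ℙ B = ENNReal.ofReal ((1 - αc * αd) / (2 * D) * Real.exp (-(l * g))) := by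
      have hB1 : ℙ B = (Measure.map (fun ω => (S ω, Δ ω)) ℙ) A2 := by
        rw [Measure.map_apply (hmS.prodMk hmΔ) hmA2]
        rfl
      rw [hB1, hpair, Measure.prod_apply hmA2]
      have hstep : ∫⁻ s, (Measure.map Δ ℙ) (Prod.mk s ⁻¹' A2) ∂(Measure.map S ℙ)
          = ∫⁻ s, ENNReal.ofReal (laplaceCDF l (-g - αd * s)) ∂(Measure.map S ℙ) := by
        refine lintegral_congr fun s => ?_
        have hfib : (Prod.mk s ⁻¹' A2) = Set.Iio (-g - αd * s) := rfl
        rw [hfib, Iio_eq_Iic_of_cont_cdf (laplaceCDF_cont l) hνIic, hνIic]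
      rw [hstep, hμeq, mixM_lintegral p0 p1 A c Smax hmh]
      have h0v : laplaceCDF l (-g - αd * 0) = Real.exp (-(l * g)) / 2 := by
        rw [show -g - αd * 0 = -g by ring, laplaceCDF_nonpos l (by linarith)]
        congr 2
        ring
      have hSv : laplaceCDF l (-g - αd * Smax) = Real.exp (l * (-g - αd * Smax)) / 2 :=
        laplaceCDF_nonpos l (by nlinarith)
      have hmid : (∫⁻ s in Set.Ioo 0 Smax, ENNReal.ofReal (A * Real.exp (-(c * s))) *
            ENNReal.ofReal (laplaceCDF l (-g - αd * s)))
          = ENNReal.ofReal (A * (Real.exp (-(l * g)) / 2) *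
              ((1 - Real.exp (-(k' * Smax))) / k')) := by
        have hpt : ∀ s ∈ Set.Ioo (0:ℝ) Smax,
            ENNReal.ofReal (A * Real.exp (-(c * s))) *
              ENNReal.ofReal (laplaceCDF l (-g - αd * s))
            = ENNReal.ofReal (A * (Real.exp (-(l * g)) / 2) * Real.exp (-(k' * s))) := by
          intro s hs
          rw [laplaceCDF_nonpos l (by nlinarith [hs.1] : -g - αd * s ≤ 0),
            ← ENNReal.ofReal_mul (by positivity)]
          congr 1
          have e1 : Real.exp (l * (-g - αd * s))
              = Real.exp (-(l * g)) * Real.exp (-(l * αd * s)) := by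
            rw [← Real.exp_add]; congr 1; ring
          have e2 : Real.exp (-(k' * s))
              = Real.exp (-(c * s)) * Real.exp (-(l * αd * s)) := by
            rw [← Real.exp_add]; congr 1; rw [hk'def]; ring
          rw [e1, e2]; ring
        rw [setLIntegral_congr_fun measurableSet_Ioo hpt,
          Measure.restrict_congr_set Ioo_ae_eq_Ioc,
          myLintegral_exp_Ioc _ k' 0 Smax (by positivity) hk'.ne' hSmax.le]
        rw [show -(k' * 0) = 0 by ring, Real.exp_zero]
        ring_nf
      rw [hmid, h0v, hSv]
      have hnn2 : 0 ≤ A * (Real.exp (-(l * g)) / 2) * ((1 - Real.exp (-(k' * Smax))) / k') := by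
        apply mul_nonneg (by positivity)
        apply div_nonneg (by linarith) hk'.le
      rw [← ENNReal.ofReal_mul hp0, ← ENNReal.ofReal_mul hp1,
        ← ENNReal.ofReal_add (by positivity) hnn2,
        ← ENNReal.ofReal_add (add_nonneg (by positivity) hnn2) (by positivity)]
      congr 1
      have hv1 : Real.exp (l * (-g - αd * Smax))
          = Real.exp (-(l * g)) * Real.exp (-(l * αd * Smax)) := by
        rw [← Real.exp_add]; congr 1; ring
      have hv2 : Real.exp (-(k' * Smax)) = E * Real.exp (-(l * αd * Smax)) := by
        rw [hEdef, ← Real.exp_add]; congr 1; rw [hk'def]; ring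
      rw [hv1, hv2, hp0def, hp1def, hAdef, hk'def, hcdef]
      have hk'ne : (1/αc - αd) * l / 2 + l * αd ≠ 0 := by
        rw [← hcdef, ← hk'def]; exact hk'.ne'
      field_simp
      ring
    rw [hevent, prob_compl_eq_one_sub hmB, hBval,
      ENNReal.toReal_sub_of_le (by rw [← hBval]; exact prob_le_one) ENNReal.one_ne_top,
      ENNReal.toReal_one, ENNReal.toReal_ofReal (by positivity)]
    rw [hEeq, ← hDdef]
  · intro hg
    have he : {ω | min (max (-(Δ ω) - αd * S ω) 0) Gmax ≤ g} = ∅ := by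
      ext ω
      simp only [Set.mem_setOf_eq, Set.mem_empty_iff_false, iff_false, not_le]
      exact lt_of_lt_of_le hg (le_min (le_max_right _ _) hGmax.le)
    rw [he]
    simp
  · intro hg
    have he : {ω | min (max (-(Δ ω) - αd * S ω) 0) Gmax ≤ g} = Set.univ := by
      ext ω
      simp only [Set.mem_setOf_eq, Set.mem_univ, iff_true]
      exact le_trans (min_le_right _ _) hg
    rw [he]
    simp
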